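/- Let Q be a d×d real Markov generator (d ≥ 2) satisfying Q² = −c·Q with c > 0. Then 0 is a simple eigenvalue of Q (algebraic multiplicity 1, equivalently rank Q = d − 1) if and only if Q is an equal-input generator with summatory parameter c, i.e., Q = C − c·1 where C is a matrix with all rows equal to (c₁,…,c_d), all cᵢ ≥ 0, and c₁ + ⋯ + c_d = c. -/

import Mathlib

/-- A Markov generator (rate matrix): nonnegative off-diagonal entries,
each row sums to 0. -/
def IsGenerator {d : ℕ} (Q : Matrix (Fin d) (Fin d) ℝ) : Prop :=
  (∀ i j, i ≠ j → 0 ≤ Q i j) ∧ ∀ i, ∑ j, Q i j = 0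

theorem rank_eq_iff_equal_input (d : ℕ) (hd : 2 ≤ d)
    (Q : Matrix (Fin d) (Fin d) ℝ) (hQ : IsGenerator Q)
    (c : ℝ) (hc : 0 < c) (hQ2 : Q * Q = -(c • Q)) :
    Q.rank = d - 1 ↔
      ∃ cv : Fin d → ℝ, (∀ i, 0 ≤ cv i) ∧ (∑ i, cv i) = c ∧
        Q = (Matrix.of fun _ j => cv j) - c • (1 : Matrix (Fin d) (Fin d) ℝ) := by
  have hdpos : 0 < d := by omega
  set i0 : Fin d := ⟨0, hdpos⟩ with hi0
  have hone : ((fun _ => (1:ℝ)) : Fin d → ℝ) ≠ 0 := by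
    intro h
    have := congrFun h i0
    norm_num at this
  have h1mem : ((fun _ => (1:ℝ)) : Fin d → ℝ) ∈ LinearMap.ker Q.mulVecLin := by
    rw [LinearMap.mem_ker]
    funext i
    simpa [Matrix.mulVecLin_apply, Matrix.mulVec, dotProduct] using hQ.2 i
  have hrn : Q.rank + Module.finrank ℝ (LinearMap.ker Q.mulVecLin) = d := by
    have h := LinearMap.finrank_range_add_finrank_ker Q.mulVecLin
    rw [Matrix.rank]
    simpa using h
  constructor
  · intro hr
    have hker : Module.finrank ℝ (LinearMap.ker Q.mulVecLin) = 1 := by omega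
    have hspan : Submodule.span ℝ {((fun _ => (1:ℝ)) : Fin d → ℝ)}
        = LinearMap.ker Q.mulVecLin := by
      apply Submodule.eq_of_le_of_finrank_eq
      · rw [Submodule.span_le, Set.singleton_subset_iff]; exact h1mem
      · rw [finrank_span_singleton hone, hker]
    set C : Matrix (Fin d) (Fin d) ℝ := Q + c • (1 : Matrix (Fin d) (Fin d) ℝ) with hC
    have hQC : Q * C = 0 := by
      rw [hC, Matrix.mul_add, hQ2, Matrix.mul_smul, Matrix.mul_one]
      simp
    have hcol : ∀ i j, C i j = C i0 j := by
      intro i j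
      have hv : (C.mulVec (Pi.single j 1)) ∈ LinearMap.ker Q.mulVecLin := by
        rw [LinearMap.mem_ker, Matrix.mulVecLin_apply, Matrix.mulVec_mulVec, hQC,
          Matrix.zero_mulVec]
      rw [← hspan, Submodule.mem_span_singleton] at hv
      obtain ⟨a, ha⟩ := hv
      have h1 := congrFun ha i
      have h2 := congrFun ha i0
      simp only [Matrix.mulVec_single, Pi.smul_apply, smul_eq_mul, op_smul_eq_mul, Matrix.col_apply, mul_one] at h1 h2
      rw [← h1, ← h2]
    refine ⟨fun j => C i0 j, ?_, ?_, ?_⟩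
    · intro j
      obtain ⟨i, hij⟩ : ∃ i : Fin d, i ≠ j := by
        by_cases h : j = i0
        · exact ⟨⟨1, by omega⟩, by simp [h, hi0, Fin.ext_iff]⟩
        · exact ⟨i0, fun hh => h hh.symm⟩
      show 0 ≤ C i0 j
      rw [← hcol i j, hC]
      simp only [Matrix.add_apply, Matrix.smul_apply, Matrix.one_apply, hij, if_neg hij]
      simpa using hQ.1 i j hij
    · rw [show (∑ j, C i0 j) = (∑ j, Q i0 j) + ∑ j, c • (1 : Matrix (Fin d) (Fin d) ℝ) i0 j by
        simp [hC, Finset.sum_add_distrib]]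
      rw [hQ.2 i0]
      simp [Matrix.one_apply]
    · ext i j
      have := hcol i j
      simp only [Matrix.sub_apply, Matrix.of_apply, Matrix.smul_apply]
      rw [← this, hC]
      simp [Matrix.add_apply]
  · rintro ⟨cv, hnn, hsum, hQeq⟩
    have hQentry : ∀ i j, Q i j = cv j - c * (if i = j then 1 else 0) := by
      intro i j
      rw [hQeq]
      simp [Matrix.one_apply]
    have hkerle : LinearMap.ker Q.mulVecLin ≤
        Submodule.span ℝ {((fun _ => (1:ℝ)) : Fin d → ℝ)} := by
      intro x hx
      rw [LinearMap.mem_ker] at hx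
      have hx' : ∀ i, x i = (∑ j, cv j * x j) / c := by
        intro i
        have h := congrFun hx i
        simp only [Matrix.mulVecLin_apply, Matrix.mulVec, dotProduct,
          Pi.zero_apply] at h
        have h2 : ∑ j, (cv j - c * (if i = j then 1 else 0)) * x j = 0 := by
          calc ∑ j, (cv j - c * (if i = j then 1 else 0)) * x j
              = ∑ j, Q i j * x j :=
                Finset.sum_congr rfl fun j _ => by rw [hQentry i j]
            _ = 0 := h
        have h3 : (∑ j, cv j * x j) - c * x i = 0 := by
          rw [← h2]
          rw [Finset.sum_congr rfl (fun j _ => sub_mul (cv j) _ (x j)),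
            Finset.sum_sub_distrib]
          congr 1
          rw [Finset.sum_congr rfl (fun j _ => by ring_nf :
            ∀ j ∈ Finset.univ, c * (if i = j then 1 else 0) * x j
              = c * ((if i = j then 1 else 0) * x j)), ← Finset.mul_sum]
          congr 1
          simp
        field_simp
        linarith
      rw [Submodule.mem_span_singleton]
      exact ⟨(∑ j, cv j * x j) / c, by funext i; simpa using (hx' i).symm⟩
    have hkereq : LinearMap.ker Q.mulVecLin =
        Submodule.span ℝ {((fun _ => (1:ℝ)) : Fin d → ℝ)} := by
      refine le_antisymm hkerle ?_
      rw [Submodule.span_le, Set.singleton_subset_iff]; exact h1mem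
    have hker1 : Module.finrank ℝ (LinearMap.ker Q.mulVecLin) = 1 := by
      rw [hkereq, finrank_span_singleton hone]
    omega
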